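/- Let H ∈ ℂ^{Nr×Nt} and G ∈ ℂ^{Ne×Nt}, and define for Hermitian positive semidefinite Q ∈ ℂ^{Nt×Nt} the gradient map ∇C_s(Q) = H†(I + H Q H†)⁻¹H − G†(I + G Q G†)⁻¹G. Then for all Hermitian positive semidefinite X, Y ∈ ℂ^{Nt×Nt}, ‖∇C_s(X) − ∇C_s(Y)‖_F ≤ (σ_max²(H†H) + σ_max²(G†G)) ‖X − Y‖_F, where ‖·‖_F is the Frobenius norm and σ_max(·) the largest singular value. That is, L = σ_max²(H†H) + σ_max²(G†G) is a Lipschitz constant of ∇C_s on the set of Hermitian positive semidefinite matrices. -/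

import Mathlib

open Matrix
open scoped ComplexOrder

/-- The Frobenius norm `‖M‖_F = sqrt(tr(Mᴴ M))` of a complex matrix. -/
noncomputable def frobNorm {m n : ℕ} (M : Matrix (Fin m) (Fin n) ℂ) : ℝ :=
  Real.sqrt (Matrix.trace (Mᴴ * M)).re

/-- The largest singular value of a square complex matrix, i.e. the operator norm
of the associated continuous linear endomorphism of Euclidean space. -/
noncomputable def sigmaMax {n : ℕ} (M : Matrix (Fin n) (Fin n) ℂ) : ℝ :=
  ‖Matrix.toEuclideanCLM (𝕜 := ℂ) M‖

/-- The gradient of the secrecy rate: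
`∇C_s(Q) = Hᴴ(I + H Q Hᴴ)⁻¹H − Gᴴ(I + G Q Gᴴ)⁻¹G`. -/
noncomputable def gradCs {Nr Ne Nt : ℕ}
    (H : Matrix (Fin Nr) (Fin Nt) ℂ) (G : Matrix (Fin Ne) (Fin Nt) ℂ)
    (Q : Matrix (Fin Nt) (Fin Nt) ℂ) : Matrix (Fin Nt) (Fin Nt) ℂ :=
  Hᴴ * (1 + H * Q * Hᴴ)⁻¹ * H - Gᴴ * (1 + G * Q * Gᴴ)⁻¹ * G

section Aux

open scoped Matrix.Norms.L2Operator

namespace Stmt10Aux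

local notation "⟪" x ", " y "⟫" => @inner ℂ _ _ x y

/-- The matrix entries as a Euclidean vector. -/
noncomputable def matE {m n : ℕ} (M : Matrix (Fin m) (Fin n) ℂ) :
    EuclideanSpace ℂ (Fin m × Fin n) :=
  (WithLp.equiv 2 _).symm (fun p => M p.1 p.2)

lemma matE_add {m n : ℕ} (A B : Matrix (Fin m) (Fin n) ℂ) :
    matE (A + B) = matE A + matE B := rfl

lemma matE_neg {m n : ℕ} (A : Matrix (Fin m) (Fin n) ℂ) : matE (-A) = -matE A := rfl

lemma frobNorm_eq {m n : ℕ} (M : Matrix (Fin m) (Fin n) ℂ) : frobNorm M = ‖matE M‖ := by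
  rw [frobNorm, EuclideanSpace.norm_eq]
  congr 1
  have h : (Matrix.trace (Mᴴ * M)).re = ∑ j, ∑ i, ‖M i j‖ ^ 2 := by
    simp only [Matrix.trace, Matrix.diag, Matrix.mul_apply, Matrix.conjTranspose_apply,
      Complex.re_sum]
    refine Finset.sum_congr rfl fun j _ => Finset.sum_congr rfl fun i _ => ?_
    rw [Complex.star_def, mul_comm, Complex.mul_conj, Complex.ofReal_re,
      Complex.normSq_eq_norm_sq]
  rw [h, Finset.sum_comm]
  rw [Fintype.sum_prod_type]
  rfl

lemma frobNorm_nonneg {m n : ℕ} (M : Matrix (Fin m) (Fin n) ℂ) : 0 ≤ frobNorm M :=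
  Real.sqrt_nonneg _

lemma frobNorm_add_le {m n : ℕ} (A B : Matrix (Fin m) (Fin n) ℂ) :
    frobNorm (A + B) ≤ frobNorm A + frobNorm B := by
  rw [frobNorm_eq, frobNorm_eq, frobNorm_eq, matE_add]
  exact norm_add_le _ _

lemma frobNorm_neg {m n : ℕ} (A : Matrix (Fin m) (Fin n) ℂ) : frobNorm (-A) = frobNorm A := by
  rw [frobNorm_eq, frobNorm_eq, matE_neg, norm_neg]

/-- Column of a matrix as a Euclidean vector. -/
noncomputable def colE {m n : ℕ} (M : Matrix (Fin m) (Fin n) ℂ) (j : Fin n) :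
    EuclideanSpace ℂ (Fin m) :=
  (WithLp.equiv 2 _).symm (fun i => M i j)

lemma frobNorm_sq {m n : ℕ} (M : Matrix (Fin m) (Fin n) ℂ) :
    frobNorm M ^ 2 = ∑ j, ‖colE M j‖ ^ 2 := by
  rw [frobNorm_eq, EuclideanSpace.norm_eq, Real.sq_sqrt (by positivity)]
  rw [Fintype.sum_prod_type, Finset.sum_comm]
  refine Finset.sum_congr rfl fun j _ => ?_
  rw [EuclideanSpace.norm_eq, Real.sq_sqrt (by positivity)]
  rfl

lemma frobNorm_mul_left {m n p : ℕ} (A : Matrix (Fin m) (Fin n) ℂ)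
    (M : Matrix (Fin n) (Fin p) ℂ) :
    frobNorm (A * M) ≤ ‖A‖ * frobNorm M := by
  have hsq : frobNorm (A * M) ^ 2 ≤ (‖A‖ * frobNorm M) ^ 2 := by
    rw [frobNorm_sq, mul_pow, frobNorm_sq, Finset.mul_sum]
    refine Finset.sum_le_sum fun j _ => ?_
    have hcol : colE (A * M) j = (EuclideanSpace.equiv (Fin m) ℂ).symm (A *ᵥ (fun i => M i j)) := by
      rfl
    have hb : ‖colE (A * M) j‖ ≤ ‖A‖ * ‖colE M j‖ := by
      rw [hcol]
      exact Matrix.l2_opNorm_mulVec A (colE M j)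
    rw [← mul_pow]
    exact pow_le_pow_left₀ (norm_nonneg _) hb 2
  nlinarith [frobNorm_nonneg (A * M), mul_nonneg (norm_nonneg A) (frobNorm_nonneg M)]

lemma frobNorm_conjTranspose {m n : ℕ} (M : Matrix (Fin m) (Fin n) ℂ) :
    frobNorm Mᴴ = frobNorm M := by
  unfold frobNorm
  rw [Matrix.conjTranspose_conjTranspose, Matrix.trace_mul_comm]

lemma frobNorm_mul_right {m n p : ℕ} (M : Matrix (Fin m) (Fin n) ℂ)
    (B : Matrix (Fin n) (Fin p) ℂ) :
    frobNorm (M * B) ≤ frobNorm M * ‖B‖ := by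
  have h := frobNorm_mul_left Bᴴ Mᴴ
  rw [← Matrix.conjTranspose_mul M B, frobNorm_conjTranspose, frobNorm_conjTranspose,
    Matrix.l2_opNorm_conjTranspose] at h
  linarith

/-- The operator norm of `(1 + S)⁻¹` is at most 1 for `S` positive semidefinite. -/
lemma opNorm_inv_one_add_le {k : ℕ} {S : Matrix (Fin k) (Fin k) ℂ} (hS : S.PosSemidef) :
    ‖(1 + S)⁻¹‖ ≤ 1 := by
  have hpd : (1 + S).PosDef := Matrix.PosDef.add_posSemidef Matrix.PosDef.one hS
  have hdet : IsUnit (1 + S).det := (Matrix.isUnit_iff_isUnit_det _).1 hpd.isUnit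
  set T : EuclideanSpace ℂ (Fin k) →L[ℂ] EuclideanSpace ℂ (Fin k) :=
    Matrix.toEuclideanCLM (𝕜 := ℂ) (1 + S) with hT
  set T' : EuclideanSpace ℂ (Fin k) →L[ℂ] EuclideanSpace ℂ (Fin k) :=
    Matrix.toEuclideanCLM (𝕜 := ℂ) (1 + S)⁻¹ with hT'
  have hTT' : T * T' = 1 := by
    rw [hT, hT', ← _root_.map_mul, Matrix.mul_nonsing_inv _ hdet, _root_.map_one]
  have key : ∀ x : EuclideanSpace ℂ (Fin k), ‖T' x‖ ≤ 1 * ‖x‖ := by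
    intro x
    set w : EuclideanSpace ℂ (Fin k) := T' x with hw
    have hTw : T w = x := by
      have := congrArg (fun f => f x) hTT'
      simpa [ContinuousLinearMap.mul_apply] using this
    have hsplit : T w = w + Matrix.toEuclideanCLM (𝕜 := ℂ) S w := by
      rw [hT, _root_.map_add, _root_.map_one]
      simp [ContinuousLinearMap.add_apply]
    have h2 : 0 ≤ RCLike.re (⟪w, Matrix.toEuclideanCLM (𝕜 := ℂ) S w⟫) := by
      have hinner : ⟪w, Matrix.toEuclideanCLM (𝕜 := ℂ) S w⟫ =
          dotProduct (star (WithLp.equiv 2 _ w)) (S *ᵥ (WithLp.equiv 2 _ w)) := by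
        rw [EuclideanSpace.inner_eq_star_dotProduct, dotProduct_comm]
        congr 1
      rw [hinner]
      exact hS.re_dotProduct_nonneg _
    have h1 : ‖w‖ ^ 2 ≤ RCLike.re (⟪w, x⟫) := by
      rw [← hTw, hsplit, inner_add_right, map_add]
      have h3 : RCLike.re (⟪w, w⟫) = ‖w‖ ^ 2 := inner_self_eq_norm_sq w
      linarith
    have h4 : RCLike.re (⟪w, x⟫) ≤ ‖w‖ * ‖x‖ := re_inner_le_norm w x
    nlinarith [norm_nonneg w, norm_nonneg x]
  rw [Matrix.cstar_norm_def]
  exact ContinuousLinearMap.opNorm_le_bound _ zero_le_one key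

lemma inv_sub_inv {k : ℕ} {A B : Matrix (Fin k) (Fin k) ℂ}
    (hA : IsUnit A.det) (hB : IsUnit B.det) :
    A⁻¹ - B⁻¹ = A⁻¹ * (B - A) * B⁻¹ := by
  have h1 : A⁻¹ * B * B⁻¹ = A⁻¹ := by
    rw [mul_assoc, Matrix.mul_nonsing_inv _ hB, mul_one]
  have h2 : A⁻¹ * A * B⁻¹ = B⁻¹ := by
    rw [Matrix.nonsing_inv_mul _ hA, one_mul]
  calc A⁻¹ - B⁻¹ = A⁻¹ * B * B⁻¹ - A⁻¹ * A * B⁻¹ := by rw [h1, h2]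
    _ = A⁻¹ * (B - A) * B⁻¹ := by noncomm_ring

/-- Bound on a sandwich `Kᴴ P⁻¹ K` for `P = 1 + K Q Kᴴ`. -/
lemma sandwich_norm_le {a b : ℕ} (K : Matrix (Fin a) (Fin b) ℂ)
    {Q : Matrix (Fin b) (Fin b) ℂ} (hQ : Q.PosSemidef) :
    ‖Kᴴ * (1 + K * Q * Kᴴ)⁻¹ * K‖ ≤ ‖Kᴴ * K‖ := by
  have hps : (K * Q * Kᴴ).PosSemidef := hQ.mul_mul_conjTranspose_same K
  have hinv : ‖(1 + K * Q * Kᴴ)⁻¹‖ ≤ 1 := opNorm_inv_one_add_le hps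
  calc ‖Kᴴ * (1 + K * Q * Kᴴ)⁻¹ * K‖
      ≤ ‖Kᴴ * (1 + K * Q * Kᴴ)⁻¹‖ * ‖K‖ := Matrix.l2_opNorm_mul _ _
    _ ≤ ‖Kᴴ‖ * ‖(1 + K * Q * Kᴴ)⁻¹‖ * ‖K‖ := by
        have := Matrix.l2_opNorm_mul Kᴴ (1 + K * Q * Kᴴ)⁻¹
        exact mul_le_mul_of_nonneg_right this (norm_nonneg _)
    _ ≤ ‖Kᴴ‖ * 1 * ‖K‖ := by
        have h0 : (0:ℝ) ≤ ‖Kᴴ‖ := norm_nonneg _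
        have := mul_le_mul_of_nonneg_left hinv h0
        exact mul_le_mul_of_nonneg_right this (norm_nonneg _)
    _ = ‖K‖ * ‖K‖ := by rw [mul_one, Matrix.l2_opNorm_conjTranspose]
    _ = ‖Kᴴ * K‖ := (Matrix.l2_opNorm_conjTranspose_mul_self K).symm

end Stmt10Aux

end Aux

section MainProof

open scoped Matrix.Norms.L2Operator
open Stmt10Aux

private lemma sigmaMax_eq_l2norm {n : ℕ} (M : Matrix (Fin n) (Fin n) ℂ) :
    sigmaMax M = ‖M‖ := rfl

/-- One of the two terms of the difference of gradients. -/
private lemma term_bound {a b : ℕ} (K : Matrix (Fin a) (Fin b) ℂ)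
    {X Y : Matrix (Fin b) (Fin b) ℂ} (hX : X.PosSemidef) (hY : Y.PosSemidef) :
    frobNorm (Kᴴ * (1 + K * X * Kᴴ)⁻¹ * K - Kᴴ * (1 + K * Y * Kᴴ)⁻¹ * K)
      ≤ sigmaMax (Kᴴ * K) ^ 2 * frobNorm (X - Y) := by
  have hAx : (1 + K * X * Kᴴ).PosDef :=
    Matrix.PosDef.add_posSemidef Matrix.PosDef.one (hX.mul_mul_conjTranspose_same K)
  have hAy : (1 + K * Y * Kᴴ).PosDef :=
    Matrix.PosDef.add_posSemidef Matrix.PosDef.one (hY.mul_mul_conjTranspose_same K)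
  have hdx : IsUnit (1 + K * X * Kᴴ).det := (Matrix.isUnit_iff_isUnit_det _).1 hAx.isUnit
  have hdy : IsUnit (1 + K * Y * Kᴴ).det := (Matrix.isUnit_iff_isUnit_det _).1 hAy.isUnit
  set Px := Kᴴ * (1 + K * X * Kᴴ)⁻¹ * K with hPx
  set Py := Kᴴ * (1 + K * Y * Kᴴ)⁻¹ * K with hPy
  have hdiff : Px - Py = Px * (Y - X) * Py := by
    have h0 : (1 + K * X * Kᴴ)⁻¹ - (1 + K * Y * Kᴴ)⁻¹
        = (1 + K * X * Kᴴ)⁻¹ * (K * (Y - X) * Kᴴ) * (1 + K * Y * Kᴴ)⁻¹ := by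
      rw [inv_sub_inv hdx hdy]
      congr 2
      rw [Matrix.mul_sub, Matrix.sub_mul]
      abel
    calc Px - Py = Kᴴ * ((1 + K * X * Kᴴ)⁻¹ - (1 + K * Y * Kᴴ)⁻¹) * K := by
          rw [hPx, hPy, Matrix.mul_sub, Matrix.sub_mul]
      _ = Kᴴ * ((1 + K * X * Kᴴ)⁻¹ * (K * (Y - X) * Kᴴ) * (1 + K * Y * Kᴴ)⁻¹) * K := by
          rw [h0]
      _ = Px * (Y - X) * Py := by
          rw [hPx, hPy]
          simp only [Matrix.mul_assoc]
  have hPxn : ‖Px‖ ≤ ‖Kᴴ * K‖ := sandwich_norm_le K hX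
  have hPyn : ‖Py‖ ≤ ‖Kᴴ * K‖ := sandwich_norm_le K hY
  have hfr : frobNorm (Px - Py) ≤ ‖Px‖ * frobNorm (Y - X) * ‖Py‖ := by
    rw [hdiff]
    calc frobNorm (Px * (Y - X) * Py) ≤ frobNorm (Px * (Y - X)) * ‖Py‖ :=
          frobNorm_mul_right _ _
      _ ≤ ‖Px‖ * frobNorm (Y - X) * ‖Py‖ := by
          have := frobNorm_mul_left Px (Y - X)
          exact mul_le_mul_of_nonneg_right this (norm_nonneg _)
  have hsub : frobNorm (Y - X) = frobNorm (X - Y) := by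
    rw [← frobNorm_neg (Y - X), neg_sub]
  have hK : (0:ℝ) ≤ ‖Kᴴ * K‖ := norm_nonneg _
  have hfn : (0:ℝ) ≤ frobNorm (Y - X) := frobNorm_nonneg _
  calc frobNorm (Px - Py) ≤ ‖Px‖ * frobNorm (Y - X) * ‖Py‖ := hfr
    _ ≤ ‖Kᴴ * K‖ * frobNorm (Y - X) * ‖Kᴴ * K‖ := by
        have h1 : ‖Px‖ * frobNorm (Y - X) ≤ ‖Kᴴ * K‖ * frobNorm (Y - X) :=
          mul_le_mul_of_nonneg_right hPxn hfn
        have h2 : ‖Px‖ * frobNorm (Y - X) * ‖Py‖ ≤ ‖Kᴴ * K‖ * frobNorm (Y - X) * ‖Py‖ :=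
          mul_le_mul_of_nonneg_right h1 (norm_nonneg _)
        have h3 : ‖Kᴴ * K‖ * frobNorm (Y - X) * ‖Py‖
            ≤ ‖Kᴴ * K‖ * frobNorm (Y - X) * ‖Kᴴ * K‖ :=
          mul_le_mul_of_nonneg_left hPyn (by positivity)
        linarith
    _ = sigmaMax (Kᴴ * K) ^ 2 * frobNorm (X - Y) := by
        rw [sigmaMax_eq_l2norm, hsub]; ring

/-- `L = σ_max²(HᴴH) + σ_max²(GᴴG)` is a Lipschitz constant of the
gradient map `∇C_s` (in Frobenius norm) on the set of Hermitian positive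
semidefinite matrices. -/
theorem stmt_10 {Nr Ne Nt : ℕ}
    (H : Matrix (Fin Nr) (Fin Nt) ℂ) (G : Matrix (Fin Ne) (Fin Nt) ℂ) :
    ∀ X Y : Matrix (Fin Nt) (Fin Nt) ℂ, X.PosSemidef → Y.PosSemidef →
      frobNorm (gradCs H G X - gradCs H G Y)
        ≤ (sigmaMax (Hᴴ * H) ^ 2 + sigmaMax (Gᴴ * G) ^ 2) * frobNorm (X - Y) := by
  intro X Y hX hY
  set TH := Hᴴ * (1 + H * X * Hᴴ)⁻¹ * H - Hᴴ * (1 + H * Y * Hᴴ)⁻¹ * H with hTH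
  set TG := Gᴴ * (1 + G * X * Gᴴ)⁻¹ * G - Gᴴ * (1 + G * Y * Gᴴ)⁻¹ * G with hTG
  have hdecomp : gradCs H G X - gradCs H G Y = TH + (-TG) := by
    rw [gradCs, gradCs, hTH, hTG]
    abel
  have hH := term_bound H hX hY
  have hG := term_bound G hX hY
  rw [hdecomp]
  calc frobNorm (TH + (-TG)) ≤ frobNorm TH + frobNorm (-TG) := frobNorm_add_le _ _
    _ = frobNorm TH + frobNorm TG := by rw [frobNorm_neg]
    _ ≤ sigmaMax (Hᴴ * H) ^ 2 * frobNorm (X - Y) + sigmaMax (Gᴴ * G) ^ 2 * frobNorm (X - Y) := by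
        rw [hTH, hTG]; exact add_le_add hH hG
    _ = (sigmaMax (Hᴴ * H) ^ 2 + sigmaMax (Gᴴ * G) ^ 2) * frobNorm (X - Y) := by ring

end MainProof
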